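/- Let M be a finite nonempty set of positive integers, let p be a prime dividing some element of M, and let v be an atomic divisor of M divisible by p. Then v = v(S) where S is the subset of M consisting of the multiples of p. -/
import Mathlib


/-- `v` is the greatest positive integer dividing every element of `S` and
coprime to every element of `M \ S`. -/
def IsAtomValue (M S : Finset ℕ) (v : ℕ) : Prop :=
  0 < v ∧ (∀ m ∈ S, v ∣ m) ∧ (∀ m ∈ M \ S, Nat.Coprime v m) ∧
    ∀ w : ℕ, 0 < w → (∀ m ∈ S, w ∣ m) → (∀ m ∈ M \ S, Nat.Coprime w m) → w ≤ v

/-- `v` is an atomic divisor of `M`. -/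
def IsAtomicDivisor (M : Finset ℕ) (v : ℕ) : Prop :=
  1 < v ∧ ∃ S : Finset ℕ, S.Nonempty ∧ S ⊆ M ∧ IsAtomValue M S v

theorem stmt_5 (M : Finset ℕ) (hM : M.Nonempty) (hpos : ∀ m ∈ M, 0 < m)
    (p : ℕ) (hp : p.Prime) (hpM : ∃ m ∈ M, p ∣ m)
    (v : ℕ) (hv : IsAtomicDivisor M v) (hpv : p ∣ v) :
    IsAtomValue M (M.filter (fun m => p ∣ m)) v := by
  obtain ⟨hv1, S, hSne, hSM, hval⟩ := hv
  have hkey : M.filter (fun m => p ∣ m) = S := by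
    ext m
    simp only [Finset.mem_filter]
    constructor
    · rintro ⟨hmM, hpm⟩
      by_contra hmS
      have hcop := hval.2.2.1 m (Finset.mem_sdiff.mpr ⟨hmM, hmS⟩)
      have : p ∣ Nat.gcd v m := Nat.dvd_gcd hpv hpm
      rw [hcop] at this
      exact hp.one_lt.ne' (Nat.eq_one_of_dvd_one this)
    · intro hmS
      exact ⟨hSM hmS, hpv.trans (hval.2.1 m hmS)⟩
  rw [hkey]
  exact hval
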